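/- Let μ₁, μ₂, g₁, g₂ : [0,∞) → [0,∞) be continuously differentiable bounded functions vanishing at 0 and positive on (0,∞), b₁, b₂ ≥ 0, and define κ(σ) := (d/dσ) ln(g₁(σ)/g₂(σ)). Assume there are constants a, c > 0 such that either (A3) κ(σ) ≠ 0 and (μ₂(σ) − μ₁(σ) + b₁ − b₂)/κ(σ) ≤ −aσ² − c for all σ ∈ (0,∞), or (A4) κ(σ) ≠ 0 and (μ₂(σ) − μ₁(σ) + b₁ − b₂)/κ(σ) ≥ aσ² + c for all σ ∈ (0,∞). Then for every r ≥ c⁻¹ + a⁻¹ the two-species chemostat is strongly observable in time r: for any measurable bounded D, s_in : [0,r] → [0,∞), if (x₁, x₂, s) and (χ₁, χ₂, σ) are two solutions (continuous functions satisfying the integral equations) with x-components positive and s-components taking values in (0,∞), and s(t) = σ(t) for all t ∈ [0,r], then (x₁(0), x₂(0)) = (χ₁(0), χ₂(0)). -/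

import Mathlib

open Real Set MeasureTheory intervalIntegral

lemma chem_intervalIntegrable {f : ℝ → ℝ} {T t₁ t₂ : ℝ}
    (h : IntegrableOn f (Icc 0 T)) (h1 : t₁ ∈ Icc 0 T) (h2 : t₂ ∈ Icc 0 T) :
    IntervalIntegrable f volume t₁ t₂ :=
  IntegrableOn.intervalIntegrable <| h.mono_set <| by
    rw [uIcc]
    exact Icc_subset_Icc (le_min h1.1 h2.1) (max_le h1.2 h2.2)

lemma chem_integrableOn_of_bdd {f : ℝ → ℝ} {T C : ℝ}
    (hm : AEStronglyMeasurable f (volume.restrict (Icc 0 T)))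
    (hb : ∀ t ∈ Icc (0:ℝ) T, |f t| ≤ C) :
    IntegrableOn f (Icc 0 T) := by
  refine Integrable.mono' (integrable_const C) hm ?_
  filter_upwards [self_mem_ae_restrict (measurableSet_Icc)] with t ht
  simpa using hb t ht

lemma gronwall_zero {T K : ℝ} {z : ℝ → ℝ} (hT : 0 ≤ T) (hK : 0 ≤ K)
    (hzc : ContinuousOn z (Icc 0 T))
    (h : ∀ t ∈ Icc 0 T, |z t| ≤ K * ∫ τ in (0:ℝ)..t, |z τ|) :
    ∀ t ∈ Icc 0 T, z t = 0 := by
  obtain ⟨M, hM⟩ := (isCompact_Icc).exists_bound_of_continuousOn hzc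
  have hM0 : 0 ≤ M := le_trans (norm_nonneg (z 0)) (hM 0 ⟨le_rfl, hT⟩)
  have hzabs : ContinuousOn (fun τ => |z τ|) (Icc 0 T) := hzc.abs
  have hintz : IntegrableOn (fun τ => |z τ|) (Icc 0 T) := hzabs.integrableOn_Icc
  have key : ∀ n : ℕ, ∀ t ∈ Icc 0 T, |z t| ≤ M * K ^ n * t ^ n / n.factorial := by
    intro n
    induction n with
    | zero =>
      intro t ht
      simpa using hM t ht
    | succ n ih =>
      intro t ht
      have h0t : (0:ℝ) ≤ t := ht.1
      have hsub : Icc (0:ℝ) t ⊆ Icc 0 T := Icc_subset_Icc le_rfl ht.2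
      have hii1 : IntervalIntegrable (fun τ => |z τ|) volume 0 t :=
        chem_intervalIntegrable hintz ⟨le_rfl, hT⟩ ht
      have hii2 : IntervalIntegrable (fun τ => M * K ^ n * τ ^ n / n.factorial) volume 0 t := by
        apply Continuous.intervalIntegrable
        continuity
      have hmono : (∫ τ in (0:ℝ)..t, |z τ|)
          ≤ ∫ τ in (0:ℝ)..t, M * K ^ n * τ ^ n / n.factorial :=
        integral_mono_on h0t hii1 hii2 (fun x hx => ih x (hsub hx))
      have hcalc : (∫ τ in (0:ℝ)..t, M * K ^ n * τ ^ n / n.factorial)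
          = M * K ^ n / n.factorial * (t ^ (n+1) / (n+1)) := by
        have hfe : (fun τ : ℝ => M * K ^ n * τ ^ n / n.factorial)
            = fun τ : ℝ => (M * K ^ n / n.factorial) * τ ^ n := by
          funext τ; ring
        rw [hfe, intervalIntegral.integral_const_mul, integral_pow]
        ring
      have hKz : K * (∫ τ in (0:ℝ)..t, |z τ|)
          ≤ K * (M * K ^ n / n.factorial * (t ^ (n+1) / (n+1))) := by
        rw [← hcalc]; exact mul_le_mul_of_nonneg_left hmono hK
      refine le_trans (h t ht) (le_trans hKz (le_of_eq ?_))
      rw [Nat.factorial_succ]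
      push_cast
      have h1 : ((n:ℝ) + 1) ≠ 0 := by positivity
      field_simp
      ring
  intro t ht
  have hlim : Filter.Tendsto (fun n : ℕ => M * K ^ n * t ^ n / n.factorial)
      Filter.atTop (nhds 0) := by
    have h1 : (fun n : ℕ => M * K ^ n * t ^ n / n.factorial)
        = fun n : ℕ => M * ((K * t) ^ n / n.factorial) := by
      funext n; rw [mul_pow]; ring
    rw [h1]
    simpa using (FloorSemiring.tendsto_pow_div_factorial_atTop (K * t)).const_mul M
  have hle : |z t| ≤ 0 :=
    ge_of_tendsto hlim (Filter.Eventually.of_forall fun n => key n t ht)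
  exact abs_eq_zero.mp (le_antisymm hle (abs_nonneg _))

lemma linear_integral_zero {T K : ℝ} {h z : ℝ → ℝ} (hT : 0 ≤ T) (hK : 0 ≤ K)
    (hzc : ContinuousOn z (Icc 0 T))
    (hb : ∀ t ∈ Icc 0 T, |h t| ≤ K)
    (hint : IntegrableOn (fun τ => h τ * z τ) (Icc 0 T))
    (heq : ∀ t ∈ Icc 0 T, z t = ∫ τ in (0:ℝ)..t, h τ * z τ) :
    ∀ t ∈ Icc 0 T, z t = 0 := by
  apply gronwall_zero hT hK hzc
  intro t ht
  rw [heq t ht]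
  have hii1 : IntervalIntegrable (fun τ => |h τ * z τ|) volume 0 t :=
    (chem_intervalIntegrable hint ⟨le_rfl, hT⟩ ht).abs
  have hii2 : IntervalIntegrable (fun τ => K * |z τ|) volume 0 t :=
    chem_intervalIntegrable (((continuousOn_const (c := K)).mul hzc.abs).integrableOn_Icc)
      ⟨le_rfl, hT⟩ ht
  calc |∫ τ in (0:ℝ)..t, h τ * z τ| ≤ ∫ τ in (0:ℝ)..t, |h τ * z τ| :=
        intervalIntegral.abs_integral_le_integral_abs ht.1
    _ ≤ ∫ τ in (0:ℝ)..t, K * |z τ| := by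
        refine integral_mono_on ht.1 hii1 hii2 (fun x hx => ?_)
        rw [abs_mul]
        exact mul_le_mul_of_nonneg_right (hb x ⟨hx.1, le_trans hx.2 ht.2⟩) (abs_nonneg _)
    _ = K * ∫ τ in (0:ℝ)..t, |z τ| := intervalIntegral.integral_const_mul _ _

lemma initial_zero_of_zero {T K : ℝ} {h z : ℝ → ℝ} (hT : 0 ≤ T) (hK : 0 ≤ K)
    (hzc : ContinuousOn z (Icc 0 T)) (hb : ∀ t ∈ Icc 0 T, |h t| ≤ K)
    (hint : IntegrableOn (fun τ => h τ * z τ) (Icc 0 T))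
    (heq : ∀ t ∈ Icc 0 T, z t = z 0 + ∫ τ in (0:ℝ)..t, h τ * z τ)
    {t₀ : ℝ} (ht₀ : t₀ ∈ Icc 0 T) (hz0 : z t₀ = 0) : z 0 = 0 := by
  set Z : ℝ → ℝ := fun τ => z (t₀ - τ) with hZ
  set Hh : ℝ → ℝ := fun τ => -h (t₀ - τ) with hHh
  have hmap : ∀ τ ∈ Icc (0:ℝ) t₀, t₀ - τ ∈ Icc 0 T := by
    intro τ hτ
    exact ⟨by linarith [hτ.2], by linarith [hτ.1, ht₀.2]⟩
  have hZc : ContinuousOn Z (Icc 0 t₀) :=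
    hzc.comp (Continuous.continuousOn (continuous_const.sub continuous_id)) hmap
  have hHb : ∀ τ ∈ Icc (0:ℝ) t₀, |Hh τ| ≤ K := by
    intro τ hτ
    rw [hHh, abs_neg]
    exact hb _ (hmap τ hτ)
  have hiT : IntervalIntegrable (fun τ => h τ * z τ) volume 0 t₀ :=
    chem_intervalIntegrable hint ⟨le_rfl, hT⟩ ht₀
  have hZint : IntegrableOn (fun τ => Hh τ * Z τ) (Icc 0 t₀) := by
    have h1 : IntervalIntegrable (fun x => (fun y => h y * z y) (t₀ - x)) volume (t₀ - 0) (t₀ - t₀) :=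
      hiT.comp_sub_left t₀
    have h2 : IntervalIntegrable (fun x => h (t₀ - x) * z (t₀ - x)) volume 0 t₀ := by
      simpa using h1.symm
    have h3 := h2.neg
    rw [intervalIntegrable_iff_integrableOn_Icc_of_le ht₀.1] at h3
    refine h3.congr_fun (fun x _ => ?_) measurableSet_Icc
    simp [hHh, hZ]
  have hZeq : ∀ τ ∈ Icc (0:ℝ) t₀, Z τ = ∫ x in (0:ℝ)..τ, Hh x * Z x := by
    intro τ hτ
    have h1 : IntervalIntegrable (fun y => h y * z y) volume 0 (t₀ - τ) :=
      chem_intervalIntegrable hint ⟨le_rfl, hT⟩ (hmap τ hτ)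
    have h2 : IntervalIntegrable (fun y => h y * z y) volume (t₀ - τ) t₀ :=
      chem_intervalIntegrable hint (hmap τ hτ) ht₀
    have hadd := intervalIntegral.integral_add_adjacent_intervals h1 h2
    have e1 := heq (t₀ - τ) (hmap τ hτ)
    have e2 := heq t₀ ht₀
    rw [hz0] at e2
    have hcomp : (∫ x in (0:ℝ)..τ, Hh x * Z x)
        = ∫ x in (0:ℝ)..τ, (fun y => -(h y * z y)) (t₀ - x) := by
      apply intervalIntegral.integral_congr
      intro x _
      simp only [hHh, hZ, neg_mul]
    rw [hcomp, intervalIntegral.integral_comp_sub_left (fun y => -(h y * z y)) t₀]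
    simp only [sub_zero]
    rw [intervalIntegral.integral_neg]
    rw [hZ]
    simp only
    linarith [hadd, e1, e2]
  have := linear_integral_zero ht₀.1 hK hZc hHb hZint hZeq t₀ ⟨ht₀.1, le_rfl⟩
  simpa [hZ] using this

lemma vanish_of_integral_zero_aux {T : ℝ} {F : ℝ → ℝ} (hT : 0 < T)
    (hFc : ContinuousOn F (Icc 0 T))
    (hF : ∀ t ∈ Icc 0 T, (∫ τ in (0:ℝ)..t, F τ) = 0)
    {t : ℝ} (ht : t ∈ Icc 0 T) (hpos : 0 < F t) : False := by
  set ε := F t / 2 with hε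
  have hεpos : 0 < ε := by positivity
  obtain ⟨δ, hδ, hδ'⟩ := Metric.continuousWithinAt_iff.1 (hFc t ht) ε hεpos
  set t₁ := max 0 (t - δ/2) with ht₁
  set t₂ := min T (t + δ/2) with ht₂
  have h1 : (0:ℝ) ≤ t₁ := le_max_left _ _
  have h2 : t₂ ≤ T := min_le_left _ _
  have h12 : t₁ < t₂ := by
    rw [ht₁, ht₂, max_lt_iff, lt_min_iff, lt_min_iff]
    refine ⟨⟨hT, by linarith [ht.1]⟩, ⟨by linarith [ht.2], by linarith⟩⟩
  have hsub : Icc t₁ t₂ ⊆ Icc 0 T := Icc_subset_Icc h1 h2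
  have hFb : ∀ x ∈ Icc t₁ t₂, ε ≤ F x := by
    intro x hx
    have hx1 : t - δ/2 ≤ x := le_trans (le_max_right 0 (t - δ/2)) hx.1
    have hx2 : x ≤ t + δ/2 := le_trans hx.2 (min_le_right T (t + δ/2))
    have hd : dist x t < δ := by
      rw [Real.dist_eq, abs_sub_lt_iff]
      constructor <;> linarith
    have := hδ' (hsub hx) hd
    rw [Real.dist_eq, abs_sub_lt_iff] at this
    rw [hε]; linarith [this.2]
  have hint : IntegrableOn F (Icc 0 T) := hFc.integrableOn_Icc
  have hii1 : IntervalIntegrable F volume 0 t₁ :=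
    chem_intervalIntegrable hint ⟨le_rfl, hT.le⟩ ⟨h1, le_trans h12.le h2⟩
  have hii2 : IntervalIntegrable F volume t₁ t₂ :=
    chem_intervalIntegrable hint ⟨h1, le_trans h12.le h2⟩ ⟨le_trans h1 h12.le, h2⟩
  have hadd := intervalIntegral.integral_add_adjacent_intervals hii1 hii2
  have hz1 := hF t₁ ⟨h1, le_trans h12.le h2⟩
  have hz2 := hF t₂ ⟨le_trans h1 h12.le, h2⟩
  have hzero : (∫ τ in t₁..t₂, F τ) = 0 := by rw [hz1, hz2] at hadd; linarith
  have hmono : (∫ τ in t₁..t₂, (ε:ℝ)) ≤ ∫ τ in t₁..t₂, F τ :=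
    integral_mono_on h12.le (intervalIntegrable_const) hii2 hFb
  rw [intervalIntegral.integral_const, hzero, smul_eq_mul] at hmono
  nlinarith [mul_pos (sub_pos.2 h12) hεpos]

lemma vanish_of_integral_zero {T : ℝ} {F : ℝ → ℝ} (hT : 0 < T)
    (hFc : ContinuousOn F (Icc 0 T))
    (hF : ∀ t ∈ Icc 0 T, (∫ τ in (0:ℝ)..t, F τ) = 0) :
    ∀ t ∈ Icc 0 T, F t = 0 := by
  intro t ht
  rcases lt_trichotomy (F t) 0 with hlt | heq | hgt
  · exfalso
    refine vanish_of_integral_zero_aux (F := fun τ => -F τ) hT hFc.neg ?_ ht (by simpa using neg_pos.2 hlt)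
    intro τ hτ
    rw [intervalIntegral.integral_neg, hF τ hτ, neg_zero]
  · exact heq
  · exact absurd (vanish_of_integral_zero_aux hT hFc hF ht hgt) not_false
lemma primitive_continuousOn {T : ℝ} {f : ℝ → ℝ} (hf : IntegrableOn f (Icc 0 T)) :
    ContinuousOn (fun x => ∫ τ in (0:ℝ)..x, f τ) (Icc 0 T) := by
  refine (continuousOn_primitive hf).congr ?_
  intro x hx
  simp only
  rw [intervalIntegral.integral_of_le hx.1]

lemma mul_integrableOn {T C : ℝ} {φ f : ℝ → ℝ} (hf : IntegrableOn f (Icc 0 T))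
    (hφm : AEStronglyMeasurable φ (volume.restrict (Icc 0 T)))
    (hφb : ∀ x ∈ Icc (0:ℝ) T, |φ x| ≤ C) :
    IntegrableOn (fun x => φ x * f x) (Icc 0 T) := by
  refine Integrable.bdd_mul (c := |C|) hf hφm ?_
  filter_upwards [self_mem_ae_restrict measurableSet_Icc] with x hx
  simp only [Real.norm_eq_abs]
  exact le_trans (hφb x hx) (le_abs_self C)

lemma contOn_mul_integrableOn {T : ℝ} {φ f : ℝ → ℝ} (hf : IntegrableOn f (Icc 0 T))
    (hφ : ContinuousOn φ (Icc 0 T)) : IntegrableOn (fun x => φ x * f x) (Icc 0 T) := by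
  obtain ⟨C, hC⟩ := isCompact_Icc.exists_bound_of_continuousOn hφ
  exact mul_integrableOn hf (hφ.aestronglyMeasurable measurableSet_Icc)
    (fun x hx => by simpa using hC x hx)

lemma primitive_mul_primitive {T : ℝ} {f g : ℝ → ℝ} (hT : 0 ≤ T)
    (hf : IntegrableOn f (Icc 0 T)) (hg : IntegrableOn g (Icc 0 T)) :
    ∀ t ∈ Icc 0 T,
      (∫ τ in (0:ℝ)..t, ((∫ x in (0:ℝ)..τ, f x) * g τ + (∫ x in (0:ℝ)..τ, g x) * f τ))
        = (∫ τ in (0:ℝ)..t, f τ) * (∫ τ in (0:ℝ)..t, g τ) := by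
  intro t ht
  have h0t : (0:ℝ) ≤ t := ht.1
  set Fp : ℝ → ℝ := fun x => ∫ τ in (0:ℝ)..x, f τ with hFp
  set Gp : ℝ → ℝ := fun x => ∫ τ in (0:ℝ)..x, g τ with hGp
  have hFpc : ContinuousOn Fp (Icc 0 T) := primitive_continuousOn hf
  have hGpc : ContinuousOn Gp (Icc 0 T) := primitive_continuousOn hg
  have hgFp : IntegrableOn (fun τ => Fp τ * g τ) (Icc 0 T) := contOn_mul_integrableOn hg hFpc
  have hfGp : IntegrableOn (fun τ => Gp τ * f τ) (Icc 0 T) := contOn_mul_integrableOn hf hGpc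
  set A : Set ℝ := Ioc (0:ℝ) t with hA
  have hAsub : A ⊆ Icc 0 T := fun x hx => ⟨hx.1.le, le_trans hx.2 ht.2⟩
  set μA : Measure ℝ := volume.restrict A with hμA
  have hfA : Integrable f μA := hf.mono_set hAsub
  have hgA : Integrable g μA := hg.mono_set hAsub
  set F : ℝ × ℝ → ℝ := fun p => f p.1 * g p.2 with hF
  have hFint : Integrable F (μA.prod μA) := Integrable.mul_prod hfA hgA
  set S : Set (ℝ × ℝ) := {p | p.1 < p.2} with hS
  have hSm : MeasurableSet S := (isOpen_lt continuous_fst continuous_snd).measurableSet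
  have hFiInt : Integrable (S.indicator F) (μA.prod μA) := hFint.indicator hSm
  -- first computation : iterate x then y
  have e1 : (∫ p, S.indicator F p ∂(μA.prod μA)) = ∫ x, (Gp t - Gp x) * f x ∂μA := by
    rw [MeasureTheory.integral_prod _ hFiInt]
    refine integral_congr_ae ?_
    filter_upwards [self_mem_ae_restrict measurableSet_Ioc] with x hx
    have hfun : (fun y => S.indicator F (x, y)) = (Ioi x).indicator (fun y => f x * g y) := by
      funext y; by_cases hxy : x < y <;>
        simp [Set.indicator_apply, hS, hF, hxy, mem_Ioi]
    rw [hfun, MeasureTheory.integral_indicator measurableSet_Ioi, hμA,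
      Measure.restrict_restrict measurableSet_Ioi]
    have hset : Ioi x ∩ A = Ioc x t := by
      rw [hA, inter_comm, Ioc_inter_Ioi, sup_eq_right.mpr hx.1.le]
    rw [hset, MeasureTheory.integral_const_mul, mul_comm]
    congr 1
    have h1 : IntervalIntegrable g volume 0 x := chem_intervalIntegrable hg ⟨le_rfl, hT⟩ (hAsub hx)
    have h2 : IntervalIntegrable g volume x t := chem_intervalIntegrable hg (hAsub hx) ht
    have hadd := intervalIntegral.integral_add_adjacent_intervals h1 h2
    rw [← intervalIntegral.integral_of_le hx.2]
    simp only [hGp]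
    linarith [hadd]
  -- second computation : iterate y then x
  have e2 : (∫ p, S.indicator F p ∂(μA.prod μA)) = ∫ y, Fp y * g y ∂μA := by
    rw [MeasureTheory.integral_prod_symm _ hFiInt]
    refine integral_congr_ae ?_
    filter_upwards [self_mem_ae_restrict measurableSet_Ioc] with y hy
    have hfun : (fun x => S.indicator F (x, y)) = (Iio y).indicator (fun x => f x * g y) := by
      funext x; by_cases hxy : x < y <;>
        simp [Set.indicator_apply, hS, hF, hxy, mem_Iio]
    rw [hfun, MeasureTheory.integral_indicator measurableSet_Iio, hμA,
      Measure.restrict_restrict measurableSet_Iio]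
    have hset : Iio y ∩ A = Ioo 0 y := by
      apply Set.ext; intro x
      simp only [mem_inter_iff, mem_Iio, hA, mem_Ioc, mem_Ioo]
      constructor
      · rintro ⟨h1, h2, h3⟩; exact ⟨h2, h1⟩
      · rintro ⟨h1, h2⟩; exact ⟨h2, h1, le_trans h2.le hy.2⟩
    rw [hset, ← MeasureTheory.integral_Ioc_eq_integral_Ioo, MeasureTheory.integral_mul_const]
    simp only [hFp]
    rw [← intervalIntegral.integral_of_le hy.1.le, mul_comm]
  -- assemble
  have hInt1 : IntervalIntegrable (fun τ => Fp τ * g τ) volume 0 t :=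
    chem_intervalIntegrable hgFp ⟨le_rfl, hT⟩ ht
  have hInt2 : IntervalIntegrable (fun τ => Gp τ * f τ) volume 0 t :=
    chem_intervalIntegrable hfGp ⟨le_rfl, hT⟩ ht
  have q1 : (∫ τ in (0:ℝ)..t, Fp τ * g τ) = ∫ p, S.indicator F p ∂(μA.prod μA) := by
    rw [intervalIntegral.integral_of_le h0t, e2]
  have q2 : (∫ τ in (0:ℝ)..t, Gp τ * f τ)
      = Gp t * Fp t - ∫ p, S.indicator F p ∂(μA.prod μA) := by
    rw [intervalIntegral.integral_of_le h0t, e1]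
    have hfe : (fun x => (Gp t - Gp x) * f x) = fun x => Gp t * f x - Gp x * f x := by
      funext x; ring
    rw [hfe, MeasureTheory.integral_sub (hfA.const_mul (Gp t)) (hfGp.mono_set hAsub),
      MeasureTheory.integral_const_mul]
    have hFt : (∫ x, f x ∂μA) = Fp t := by
      rw [hμA, hA, ← intervalIntegral.integral_of_le h0t]
    rw [hFt]
    ring
  rw [intervalIntegral.integral_add hInt1 hInt2, q1, q2]
  ring

lemma integral_by_parts {T : ℝ} {f g u ρ : ℝ → ℝ} {u0 ρ0 : ℝ} (hT : 0 ≤ T)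
    (hf : IntegrableOn f (Icc 0 T)) (hg : IntegrableOn g (Icc 0 T))
    (hu : ∀ t ∈ Icc 0 T, u t = u0 + ∫ τ in (0:ℝ)..t, f τ)
    (hρ : ∀ t ∈ Icc 0 T, ρ t = ρ0 + ∫ τ in (0:ℝ)..t, g τ) :
    ∀ t ∈ Icc 0 T, u t * ρ t = u0 * ρ0 + ∫ τ in (0:ℝ)..t, (u τ * g τ + ρ τ * f τ) := by
  intro t ht
  have hFpc : ContinuousOn (fun x => ∫ τ in (0:ℝ)..x, f τ) (Icc 0 T) := primitive_continuousOn hf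
  have hGpc : ContinuousOn (fun x => ∫ τ in (0:ℝ)..x, g τ) (Icc 0 T) := primitive_continuousOn hg
  have congr1 : (∫ τ in (0:ℝ)..t, (u τ * g τ + ρ τ * f τ))
      = ∫ τ in (0:ℝ)..t, ((u0 * g τ + ρ0 * f τ)
          + ((∫ x in (0:ℝ)..τ, f x) * g τ + (∫ x in (0:ℝ)..τ, g x) * f τ)) := by
    apply intervalIntegral.integral_congr
    intro τ hτ
    rw [uIcc_of_le ht.1] at hτ
    have hτ' : τ ∈ Icc 0 T := ⟨hτ.1, le_trans hτ.2 ht.2⟩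
    simp only
    rw [hu τ hτ', hρ τ hτ']
    ring
  have II1 : IntervalIntegrable (fun τ => u0 * g τ + ρ0 * f τ) volume 0 t :=
    chem_intervalIntegrable ((hg.const_mul u0).add (hf.const_mul ρ0)) ⟨le_rfl, hT⟩ ht
  have II2 : IntervalIntegrable
      (fun τ => (∫ x in (0:ℝ)..τ, f x) * g τ + (∫ x in (0:ℝ)..τ, g x) * f τ) volume 0 t :=
    chem_intervalIntegrable ((contOn_mul_integrableOn hg hFpc).add
      (contOn_mul_integrableOn hf hGpc)) ⟨le_rfl, hT⟩ ht
  have II3 : IntervalIntegrable (fun τ => u0 * g τ) volume 0 t :=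
    chem_intervalIntegrable (hg.const_mul u0) ⟨le_rfl, hT⟩ ht
  have II4 : IntervalIntegrable (fun τ => ρ0 * f τ) volume 0 t :=
    chem_intervalIntegrable (hf.const_mul ρ0) ⟨le_rfl, hT⟩ ht
  rw [congr1, intervalIntegral.integral_add II1 II2,
    intervalIntegral.integral_add II3 II4,
    intervalIntegral.integral_const_mul, intervalIntegral.integral_const_mul,
    primitive_mul_primitive hT hf hg t ht, hu t ht, hρ t ht]
  ring

lemma chem_antitoneOn {r : ℝ} {f : ℝ → ℝ} (hf : ContinuousOn f (Icc 0 r))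
    (hd : ∀ x ∈ Ioo (0:ℝ) r, ∃ d, d ≤ 0 ∧ HasDerivAt f d x) : AntitoneOn f (Icc 0 r) := by
  apply antitoneOn_of_deriv_nonpos (convex_Icc 0 r) hf
  · intro x hx
    rw [interior_Icc] at hx
    obtain ⟨d, _, hdd⟩ := hd x hx
    exact hdd.differentiableAt.differentiableWithinAt
  · intro x hx
    rw [interior_Icc] at hx
    obtain ⟨d, hd0, hdd⟩ := hd x hx
    rw [hdd.deriv]
    exact hd0

lemma chem_monotoneOn {r : ℝ} {f : ℝ → ℝ} (hf : ContinuousOn f (Icc 0 r))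
    (hd : ∀ x ∈ Ioo (0:ℝ) r, ∃ d, 0 ≤ d ∧ HasDerivAt f d x) : MonotoneOn f (Icc 0 r) := by
  apply monotoneOn_of_deriv_nonneg (convex_Icc 0 r) hf
  · intro x hx
    rw [interior_Icc] at hx
    obtain ⟨d, _, hdd⟩ := hd x hx
    exact hdd.differentiableAt.differentiableWithinAt
  · intro x hx
    rw [interior_Icc] at hx
    obtain ⟨d, hd0, hdd⟩ := hd x hx
    rw [hdd.deriv]
    exact hd0

set_option maxHeartbeats 2000000 in
/-- Theorem 3.9: under condition (A3) or (A4), the two-species chemostat (with substrate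
constrained to `(0,∞)`) is strongly observable in any time `r ≥ c⁻¹ + a⁻¹`. -/
theorem two_species_chemostat_strongly_observable_A3_A4
    (μ₁ μ₂ g₁ g₂ : ℝ → ℝ)
    (hμ₁C : ContDiffOn ℝ 1 μ₁ (Ici 0)) (hμ₂C : ContDiffOn ℝ 1 μ₂ (Ici 0))
    (hg₁C : ContDiffOn ℝ 1 g₁ (Ici 0)) (hg₂C : ContDiffOn ℝ 1 g₂ (Ici 0))
    (hμ₁bdd : ∃ M, ∀ u ≥ (0:ℝ), μ₁ u ≤ M) (hμ₂bdd : ∃ M, ∀ u ≥ (0:ℝ), μ₂ u ≤ M)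
    (hg₁bdd : ∃ M, ∀ u ≥ (0:ℝ), g₁ u ≤ M) (hg₂bdd : ∃ M, ∀ u ≥ (0:ℝ), g₂ u ≤ M)
    (hμ₁0 : μ₁ 0 = 0) (hμ₂0 : μ₂ 0 = 0) (hg₁0 : g₁ 0 = 0) (hg₂0 : g₂ 0 = 0)
    (hμ₁pos : ∀ u > (0:ℝ), 0 < μ₁ u) (hμ₂pos : ∀ u > (0:ℝ), 0 < μ₂ u)
    (hg₁pos : ∀ u > (0:ℝ), 0 < g₁ u) (hg₂pos : ∀ u > (0:ℝ), 0 < g₂ u)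
    (b₁ b₂ : ℝ) (hb₁ : 0 ≤ b₁) (hb₂ : 0 ≤ b₂)
    (κ : ℝ → ℝ)
    (hκ : ∀ u : ℝ, κ u = deriv (fun v => Real.log (g₁ v / g₂ v)) u)
    (a c : ℝ) (ha : 0 < a) (hc : 0 < c)
    (hA : (∀ u > (0:ℝ), κ u ≠ 0 ∧ (μ₂ u - μ₁ u + b₁ - b₂) / κ u ≤ -a * u ^ 2 - c) ∨
          (∀ u > (0:ℝ), κ u ≠ 0 ∧ a * u ^ 2 + c ≤ (μ₂ u - μ₁ u + b₁ - b₂) / κ u))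
    (r : ℝ) (hr : c⁻¹ + a⁻¹ ≤ r)
    (D sIn : ℝ → ℝ) (hDmeas : Measurable D) (hsInmeas : Measurable sIn)
    (hDnn : ∀ t ∈ Icc 0 r, 0 ≤ D t) (hsInnn : ∀ t ∈ Icc 0 r, 0 ≤ sIn t)
    (hDbdd : ∃ M, ∀ t ∈ Icc 0 r, D t ≤ M) (hsInbdd : ∃ M, ∀ t ∈ Icc 0 r, sIn t ≤ M)
    (x₁ x₂ s χ₁ χ₂ σ : ℝ → ℝ)
    (hx₁C : ContinuousOn x₁ (Icc 0 r)) (hx₂C : ContinuousOn x₂ (Icc 0 r))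
    (hsC : ContinuousOn s (Icc 0 r))
    (hχ₁C : ContinuousOn χ₁ (Icc 0 r)) (hχ₂C : ContinuousOn χ₂ (Icc 0 r))
    (hσC : ContinuousOn σ (Icc 0 r))
    (hx₁pos : ∀ t ∈ Icc 0 r, 0 < x₁ t) (hx₂pos : ∀ t ∈ Icc 0 r, 0 < x₂ t)
    (hspos : ∀ t ∈ Icc 0 r, 0 < s t)
    (hχ₁pos : ∀ t ∈ Icc 0 r, 0 < χ₁ t) (hχ₂pos : ∀ t ∈ Icc 0 r, 0 < χ₂ t)
    (hσpos : ∀ t ∈ Icc 0 r, 0 < σ t)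
    (hx₁eq : ∀ t ∈ Icc 0 r,
      x₁ t = x₁ 0 + ∫ τ in (0:ℝ)..t, (μ₁ (s τ) - D τ - b₁) * x₁ τ)
    (hx₂eq : ∀ t ∈ Icc 0 r,
      x₂ t = x₂ 0 + ∫ τ in (0:ℝ)..t, (μ₂ (s τ) - D τ - b₂) * x₂ τ)
    (hseq : ∀ t ∈ Icc 0 r,
      s t = s 0 + ∫ τ in (0:ℝ)..t,
        (D τ * (sIn τ - s τ) - g₁ (s τ) * x₁ τ - g₂ (s τ) * x₂ τ))
    (hχ₁eq : ∀ t ∈ Icc 0 r,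
      χ₁ t = χ₁ 0 + ∫ τ in (0:ℝ)..t, (μ₁ (σ τ) - D τ - b₁) * χ₁ τ)
    (hχ₂eq : ∀ t ∈ Icc 0 r,
      χ₂ t = χ₂ 0 + ∫ τ in (0:ℝ)..t, (μ₂ (σ τ) - D τ - b₂) * χ₂ τ)
    (hσeq : ∀ t ∈ Icc 0 r,
      σ t = σ 0 + ∫ τ in (0:ℝ)..t,
        (D τ * (sIn τ - σ τ) - g₁ (σ τ) * χ₁ τ - g₂ (σ τ) * χ₂ τ))
    (hout : ∀ t ∈ Icc 0 r, s t = σ t) :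
    (x₁ 0, x₂ 0) = (χ₁ 0, χ₂ 0) := by
  -- ============ setup ============
  have hra : (0:ℝ) < c⁻¹ + a⁻¹ := by positivity
  have hr0 : (0:ℝ) < r := lt_of_lt_of_le hra hr
  have h0mem : (0:ℝ) ∈ Icc (0:ℝ) r := ⟨le_rfl, hr0.le⟩
  have hsmap : MapsTo s (Icc 0 r) (Ici 0) := fun t ht => (hspos t ht).le
  have hμ₁sC : ContinuousOn (fun τ => μ₁ (s τ)) (Icc 0 r) :=
    (hμ₁C.continuousOn).comp hsC hsmap
  have hμ₂sC : ContinuousOn (fun τ => μ₂ (s τ)) (Icc 0 r) :=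
    (hμ₂C.continuousOn).comp hsC hsmap
  have hg₁sC : ContinuousOn (fun τ => g₁ (s τ)) (Icc 0 r) :=
    (hg₁C.continuousOn).comp hsC hsmap
  have hg₂sC : ContinuousOn (fun τ => g₂ (s τ)) (Icc 0 r) :=
    (hg₂C.continuousOn).comp hsC hsmap
  obtain ⟨MD, hMD⟩ := hDbdd
  obtain ⟨MsIn, hMsIn⟩ := hsInbdd
  obtain ⟨Mμ₁, hMμ₁⟩ := hμ₁bdd
  obtain ⟨Mμ₂, hMμ₂⟩ := hμ₂bdd
  have hMD0 : 0 ≤ MD := le_trans (hDnn 0 h0mem) (hMD 0 h0mem)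
  have hDae : AEStronglyMeasurable D (volume.restrict (Icc 0 r)) :=
    hDmeas.aestronglyMeasurable.restrict
  have hsInae : AEStronglyMeasurable sIn (volume.restrict (Icc 0 r)) :=
    hsInmeas.aestronglyMeasurable.restrict
  have hsae : AEStronglyMeasurable s (volume.restrict (Icc 0 r)) :=
    hsC.aestronglyMeasurable measurableSet_Icc
  -- the coefficient functions
  set p : ℝ → ℝ := fun τ => μ₁ (s τ) - D τ - b₁ with hpd
  set q : ℝ → ℝ := fun τ => μ₂ (s τ) - D τ - b₂ with hqd
  set m : ℝ → ℝ := fun τ => μ₂ (s τ) - μ₁ (s τ) + b₁ - b₂ with hmd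
  set u : ℝ → ℝ := fun τ => x₁ τ - χ₁ τ with hud
  set v : ℝ → ℝ := fun τ => x₂ τ - χ₂ τ with hvd
  have huC : ContinuousOn u (Icc 0 r) := hx₁C.sub hχ₁C
  have hvC : ContinuousOn v (Icc 0 r) := hx₂C.sub hχ₂C
  have hmC : ContinuousOn m (Icc 0 r) :=
    ((hμ₂sC.sub hμ₁sC).add continuousOn_const).sub continuousOn_const
  have hmint : IntegrableOn m (Icc 0 r) := hmC.integrableOn_Icc
  have hpae : AEStronglyMeasurable p (volume.restrict (Icc 0 r)) :=
    ((hμ₁sC.aestronglyMeasurable measurableSet_Icc).sub hDae).sub aestronglyMeasurable_const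
  have hqae : AEStronglyMeasurable q (volume.restrict (Icc 0 r)) :=
    ((hμ₂sC.aestronglyMeasurable measurableSet_Icc).sub hDae).sub aestronglyMeasurable_const
  have hpb : ∀ t ∈ Icc (0:ℝ) r, |p t| ≤ Mμ₁ + MD + b₁ := by
    intro t ht
    have h1 := hMμ₁ (s t) (hspos t ht).le
    have h2 := hμ₁pos (s t) (hspos t ht)
    have h3 := hDnn t ht
    have h4 := hMD t ht
    rw [abs_le]
    constructor <;> simp only [hpd] <;> nlinarith
  have hqb : ∀ t ∈ Icc (0:ℝ) r, |q t| ≤ Mμ₂ + MD + b₂ := by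
    intro t ht
    have h1 := hMμ₂ (s t) (hspos t ht).le
    have h2 := hμ₂pos (s t) (hspos t ht)
    have h3 := hDnn t ht
    have h4 := hMD t ht
    rw [abs_le]
    constructor <;> simp only [hqd] <;> nlinarith
  have hpint : IntegrableOn p (Icc 0 r) := chem_integrableOn_of_bdd hpae hpb
  have hqint : IntegrableOn q (Icc 0 r) := chem_integrableOn_of_bdd hqae hqb
  have hpu_int : IntegrableOn (fun τ => p τ * u τ) (Icc 0 r) :=
    (contOn_mul_integrableOn hpint huC).congr
      (Filter.Eventually.of_forall fun τ => mul_comm (u τ) (p τ))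
  have hqv_int : IntegrableOn (fun τ => q τ * v τ) (Icc 0 r) :=
    (contOn_mul_integrableOn hqint hvC).congr
      (Filter.Eventually.of_forall fun τ => mul_comm (v τ) (q τ))
  have hpx₁_int : IntegrableOn (fun τ => p τ * x₁ τ) (Icc 0 r) :=
    (contOn_mul_integrableOn hpint hx₁C).congr
      (Filter.Eventually.of_forall fun τ => mul_comm (x₁ τ) (p τ))
  have hpχ₁_int : IntegrableOn (fun τ => p τ * χ₁ τ) (Icc 0 r) :=
    (contOn_mul_integrableOn hpint hχ₁C).congr
      (Filter.Eventually.of_forall fun τ => mul_comm (χ₁ τ) (p τ))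
  have hqx₂_int : IntegrableOn (fun τ => q τ * x₂ τ) (Icc 0 r) :=
    (contOn_mul_integrableOn hqint hx₂C).congr
      (Filter.Eventually.of_forall fun τ => mul_comm (x₂ τ) (q τ))
  have hqχ₂_int : IntegrableOn (fun τ => q τ * χ₂ τ) (Icc 0 r) :=
    (contOn_mul_integrableOn hqint hχ₂C).congr
      (Filter.Eventually.of_forall fun τ => mul_comm (χ₂ τ) (q τ))
  -- ============ difference equations ============
  have hueq : ∀ t ∈ Icc 0 r, u t = u 0 + ∫ τ in (0:ℝ)..t, p τ * u τ := by
    intro t ht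
    have h2' : χ₁ t = χ₁ 0 + ∫ τ in (0:ℝ)..t, p τ * χ₁ τ := by
      rw [hχ₁eq t ht]
      congr 1
      apply intervalIntegral.integral_congr
      intro τ hτ
      rw [uIcc_of_le ht.1] at hτ
      simp only [hpd]
      rw [hout τ ⟨hτ.1, le_trans hτ.2 ht.2⟩]
    have h1' : x₁ t = x₁ 0 + ∫ τ in (0:ℝ)..t, p τ * x₁ τ := hx₁eq t ht
    calc u t = (x₁ 0 + ∫ τ in (0:ℝ)..t, p τ * x₁ τ)
        - (χ₁ 0 + ∫ τ in (0:ℝ)..t, p τ * χ₁ τ) := by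
          simp only [hud]; rw [← h1', ← h2']
      _ = (x₁ 0 - χ₁ 0) + ((∫ τ in (0:ℝ)..t, p τ * x₁ τ)
            - ∫ τ in (0:ℝ)..t, p τ * χ₁ τ) := by ring
      _ = u 0 + ∫ τ in (0:ℝ)..t, (p τ * x₁ τ - p τ * χ₁ τ) := by
          rw [intervalIntegral.integral_sub
            (chem_intervalIntegrable hpx₁_int ⟨le_rfl, hr0.le⟩ ht)
            (chem_intervalIntegrable hpχ₁_int ⟨le_rfl, hr0.le⟩ ht)]
      _ = u 0 + ∫ τ in (0:ℝ)..t, p τ * u τ := by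
          congr 1
          apply intervalIntegral.integral_congr
          intro τ _
          simp only [hud]
          ring
  have hveq : ∀ t ∈ Icc 0 r, v t = v 0 + ∫ τ in (0:ℝ)..t, q τ * v τ := by
    intro t ht
    have h2' : χ₂ t = χ₂ 0 + ∫ τ in (0:ℝ)..t, q τ * χ₂ τ := by
      rw [hχ₂eq t ht]
      congr 1
      apply intervalIntegral.integral_congr
      intro τ hτ
      rw [uIcc_of_le ht.1] at hτ
      simp only [hqd]
      rw [hout τ ⟨hτ.1, le_trans hτ.2 ht.2⟩]
    have h1' : x₂ t = x₂ 0 + ∫ τ in (0:ℝ)..t, q τ * x₂ τ := hx₂eq t ht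
    calc v t = (x₂ 0 + ∫ τ in (0:ℝ)..t, q τ * x₂ τ)
        - (χ₂ 0 + ∫ τ in (0:ℝ)..t, q τ * χ₂ τ) := by
          simp only [hvd]; rw [← h1', ← h2']
      _ = (x₂ 0 - χ₂ 0) + ((∫ τ in (0:ℝ)..t, q τ * x₂ τ)
            - ∫ τ in (0:ℝ)..t, q τ * χ₂ τ) := by ring
      _ = v 0 + ∫ τ in (0:ℝ)..t, (q τ * x₂ τ - q τ * χ₂ τ) := by
          rw [intervalIntegral.integral_sub
            (chem_intervalIntegrable hqx₂_int ⟨le_rfl, hr0.le⟩ ht)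
            (chem_intervalIntegrable hqχ₂_int ⟨le_rfl, hr0.le⟩ ht)]
      _ = v 0 + ∫ τ in (0:ℝ)..t, q τ * v τ := by
          congr 1
          apply intervalIntegral.integral_congr
          intro τ _
          simp only [hvd]
          ring
  -- ============ the output constraint ============
  set F : ℝ → ℝ := fun τ => g₁ (s τ) * u τ + g₂ (s τ) * v τ with hFd
  have hFC : ContinuousOn F (Icc 0 r) := (hg₁sC.mul huC).add (hg₂sC.mul hvC)
  obtain ⟨Ms, hMs⟩ := isCompact_Icc.exists_bound_of_continuousOn hsC
  have hDsIn_int : IntegrableOn (fun τ => D τ * (sIn τ - s τ)) (Icc 0 r) := by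
    refine chem_integrableOn_of_bdd (C := MD * (MsIn + Ms)) (hDae.mul (hsInae.sub hsae)) ?_
    intro t ht
    have h1 := hDnn t ht
    have h2 := hMD t ht
    have h3 := hsInnn t ht
    have h4 := hMsIn t ht
    have h5 := hMs t ht
    rw [Real.norm_eq_abs] at h5
    have h6 := abs_nonneg (s t)
    have h7 := le_abs_self (s t)
    have h8 := neg_abs_le (s t)
    rw [abs_mul]
    have h9 : |sIn t - s t| ≤ MsIn + Ms := by
      rw [abs_le]; constructor <;> nlinarith
    have h10 : |D t| ≤ MD := by rw [abs_of_nonneg h1]; exact h2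
    exact mul_le_mul h10 h9 (abs_nonneg _) hMD0
  have hI1_int : IntegrableOn
      (fun τ => D τ * (sIn τ - s τ) - g₁ (s τ) * x₁ τ - g₂ (s τ) * x₂ τ) (Icc 0 r) :=
    (hDsIn_int.sub ((hg₁sC.mul hx₁C).integrableOn_Icc)).sub ((hg₂sC.mul hx₂C).integrableOn_Icc)
  have hI2_int : IntegrableOn
      (fun τ => D τ * (sIn τ - s τ) - g₁ (s τ) * χ₁ τ - g₂ (s τ) * χ₂ τ) (Icc 0 r) :=
    (hDsIn_int.sub ((hg₁sC.mul hχ₁C).integrableOn_Icc)).sub ((hg₂sC.mul hχ₂C).integrableOn_Icc)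
  have hFint0 : ∀ t ∈ Icc 0 r, (∫ τ in (0:ℝ)..t, F τ) = 0 := by
    intro t ht
    have h2' : σ t = σ 0 + ∫ τ in (0:ℝ)..t,
        (D τ * (sIn τ - s τ) - g₁ (s τ) * χ₁ τ - g₂ (s τ) * χ₂ τ) := by
      rw [hσeq t ht]
      congr 1
      apply intervalIntegral.integral_congr
      intro τ hτ
      rw [uIcc_of_le ht.1] at hτ
      simp only
      rw [hout τ ⟨hτ.1, le_trans hτ.2 ht.2⟩]
    have h1' := hseq t ht
    have hso : s t = σ t := hout t ht
    have hso0 : s 0 = σ 0 := hout 0 h0mem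
    have hdiff : (∫ τ in (0:ℝ)..t,
        (D τ * (sIn τ - s τ) - g₁ (s τ) * x₁ τ - g₂ (s τ) * x₂ τ))
        - (∫ τ in (0:ℝ)..t,
        (D τ * (sIn τ - s τ) - g₁ (s τ) * χ₁ τ - g₂ (s τ) * χ₂ τ)) = 0 := by
      have := h1'.symm.trans (hso.trans h2')
      linarith
    rw [← intervalIntegral.integral_sub
      (chem_intervalIntegrable hI1_int ⟨le_rfl, hr0.le⟩ ht)
      (chem_intervalIntegrable hI2_int ⟨le_rfl, hr0.le⟩ ht)] at hdiff
    have hcongr : (∫ τ in (0:ℝ)..t, F τ)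
        = -∫ τ in (0:ℝ)..t,
          ((D τ * (sIn τ - s τ) - g₁ (s τ) * x₁ τ - g₂ (s τ) * x₂ τ)
            - (D τ * (sIn τ - s τ) - g₁ (s τ) * χ₁ τ - g₂ (s τ) * χ₂ τ)) := by
      rw [← intervalIntegral.integral_neg]
      apply intervalIntegral.integral_congr
      intro τ _
      simp only [hFd, hud, hvd]
      ring
    rw [hcongr, hdiff, neg_zero]
  have hFzero : ∀ t ∈ Icc 0 r, F t = 0 := vanish_of_integral_zero hr0 hFC hFint0
  have hcon0 : g₁ (s 0) * u 0 + g₂ (s 0) * v 0 = 0 := hFzero 0 h0mem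
  have hg₂s0 : 0 < g₂ (s 0) := hg₂pos _ (hspos 0 h0mem)
  have hg₁s0 : 0 < g₁ (s 0) := hg₁pos _ (hspos 0 h0mem)
  -- ============ main case split ============
  by_cases hu0 : u 0 = 0
  · have hv0 : v 0 = 0 := by
      rw [hu0, mul_zero, zero_add] at hcon0
      exact (mul_eq_zero.mp hcon0).resolve_left (ne_of_gt hg₂s0)
    have e1 : x₁ 0 = χ₁ 0 := by
      have : x₁ 0 - χ₁ 0 = 0 := hu0
      linarith
    have e2 : x₂ 0 = χ₂ 0 := by
      have : x₂ 0 - χ₂ 0 = 0 := hv0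
      linarith
    rw [e1, e2]
  · exfalso
    -- ============ ratio function and nonvanishing ============
    set ψ : ℝ → ℝ := fun t => g₁ (s t) / g₂ (s t) with hψd
    have hψC : ContinuousOn ψ (Icc 0 r) :=
      hg₁sC.div hg₂sC (fun t ht => ne_of_gt (hg₂pos _ (hspos t ht)))
    have hψ0pos : 0 < ψ 0 := by rw [hψd]; exact div_pos hg₁s0 hg₂s0
    have hvψ : ∀ t ∈ Icc 0 r, v t = -(ψ t * u t) := by
      intro t ht
      have hFt := hFzero t ht
      simp only [hFd] at hFt
      have h2 : g₂ (s t) ≠ 0 := ne_of_gt (hg₂pos _ (hspos t ht))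
      rw [hψd]
      simp only
      rw [div_mul_eq_mul_div, ← neg_div, eq_div_iff h2]
      linarith
    have hKp0 : 0 ≤ Mμ₁ + MD + b₁ := le_trans (abs_nonneg _) (hpb 0 h0mem)
    have hKq0 : 0 ≤ Mμ₂ + MD + b₂ := le_trans (abs_nonneg _) (hqb 0 h0mem)
    have hunz : ∀ t ∈ Icc 0 r, u t ≠ 0 := by
      intro t ht h0
      exact hu0 (initial_zero_of_zero hr0.le hKp0 huC hpb hpu_int hueq ht h0)
    -- ============ the exponential of the primitive of m ============
    set H : ℝ → ℝ := fun t => ∫ τ in (0:ℝ)..t, m τ with hHd0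
    set ρ : ℝ → ℝ := fun t => Real.exp (H t) with hρd
    have hHC : ContinuousOn H (Icc 0 r) := primitive_continuousOn hmint
    have hρC : ContinuousOn ρ (Icc 0 r) := Real.continuous_exp.comp_continuousOn hHC
    have hρpos : ∀ t, 0 < ρ t := fun t => Real.exp_pos _
    have hHder : ∀ x ∈ Ioo (0:ℝ) r, HasDerivAt H (m x) x := by
      intro x hx
      have hnh : Icc (0:ℝ) r ∈ nhds x := Icc_mem_nhds hx.1 hx.2
      exact intervalIntegral.integral_hasDerivAt_right
        (chem_intervalIntegrable hmint h0mem ⟨hx.1.le, hx.2.le⟩)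
        ⟨Icc 0 r, hnh, hmC.aestronglyMeasurable measurableSet_Icc⟩
        (hmC.continuousAt hnh)
    have hρder : ∀ x ∈ Ioo (0:ℝ) r, HasDerivAt ρ (m x * ρ x) x := by
      intro x hx
      have h1 := (hHder x hx).exp
      rw [hρd]
      simp only
      convert h1 using 1
      rw [mul_comm]
    have hmρ_int : IntegrableOn (fun τ => m τ * ρ τ) (Icc 0 r) := (hmC.mul hρC).integrableOn_Icc
    have hρ0 : ρ 0 = 1 := by
      rw [hρd]
      simp only
      rw [hHd0]
      simp only
      rw [intervalIntegral.integral_same, Real.exp_zero]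
    have hρeq : ∀ t ∈ Icc 0 r, ρ t = 1 + ∫ τ in (0:ℝ)..t, m τ * ρ τ := by
      intro t ht
      rcases eq_or_lt_of_le ht.1 with h0 | h0
      · rw [← h0, hρ0, intervalIntegral.integral_same]
        ring
      · have hFTC := intervalIntegral.integral_eq_sub_of_hasDeriv_right_of_le ht.1
          (hρC.mono (Icc_subset_Icc le_rfl ht.2))
          (fun x hx => ((hρder x ⟨hx.1, lt_of_lt_of_le hx.2 ht.2⟩)).hasDerivWithinAt)
          (chem_intervalIntegrable hmρ_int h0mem ht)
        rw [hFTC, hρ0]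
        ring
    -- ============ integration by parts and uniqueness ============
    have hibp := integral_by_parts hr0.le hpu_int hmρ_int hueq hρeq
    set V : ℝ → ℝ := fun t => ψ 0 * (u t * ρ t) with hVd
    have hVC : ContinuousOn V (Icc 0 r) := continuousOn_const.mul (huC.mul hρC)
    have hVeq : ∀ t ∈ Icc 0 r, V t = ψ 0 * u 0 + ∫ τ in (0:ℝ)..t, q τ * V τ := by
      intro t ht
      rw [hVd]
      simp only
      rw [hibp t ht, mul_add]
      congr 1
      · ring
      · rw [← intervalIntegral.integral_const_mul]
        apply intervalIntegral.integral_congr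
        intro τ _
        simp only [hqd, hpd, hmd]
        ring
    have hw0 : -v 0 = ψ 0 * u 0 := by
      have := hvψ 0 h0mem
      linarith
    have hqnv_int : IntegrableOn (fun τ => q τ * -v τ) (Icc 0 r) :=
      (hqv_int.neg).congr (Filter.Eventually.of_forall fun τ => by simp only [Pi.neg_apply]; ring)
    have hqV_int : IntegrableOn (fun τ => q τ * V τ) (Icc 0 r) :=
      (contOn_mul_integrableOn hqint hVC).congr
        (Filter.Eventually.of_forall fun τ => mul_comm (V τ) (q τ))
    have hweq : ∀ t ∈ Icc 0 r, -v t = ψ 0 * u 0 + ∫ τ in (0:ℝ)..t, q τ * -v τ := by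
      intro t ht
      rw [← hw0]
      have h1 := hveq t ht
      have h2 : (∫ τ in (0:ℝ)..t, q τ * -v τ) = -∫ τ in (0:ℝ)..t, q τ * v τ := by
        rw [← intervalIntegral.integral_neg]
        apply intervalIntegral.integral_congr
        intro τ _
        ring
      rw [h2]
      linarith
    set e : ℝ → ℝ := fun t => -v t - V t with hed
    have heC : ContinuousOn e (Icc 0 r) := (hvC.neg).sub hVC
    have hqe_int : IntegrableOn (fun τ => q τ * e τ) (Icc 0 r) :=
      (hqnv_int.sub hqV_int).congr
        (Filter.Eventually.of_forall fun τ => by simp only [Pi.sub_apply, hed]; ring)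
    have heeq : ∀ t ∈ Icc 0 r, e t = ∫ τ in (0:ℝ)..t, q τ * e τ := by
      intro t ht
      have hsub := intervalIntegral.integral_sub
        (chem_intervalIntegrable hqnv_int ⟨le_rfl, hr0.le⟩ ht)
        (chem_intervalIntegrable hqV_int ⟨le_rfl, hr0.le⟩ ht)
      have hcg : (∫ τ in (0:ℝ)..t, (q τ * -v τ - q τ * V τ))
          = ∫ τ in (0:ℝ)..t, q τ * e τ := by
        apply intervalIntegral.integral_congr
        intro τ _
        simp only [hed]
        ring
      have h1 := hweq t ht
      have h2 := hVeq t ht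
      rw [hed]
      simp only
      rw [h1, h2]
      linarith [hsub, hcg]
    have hezero : ∀ t ∈ Icc 0 r, e t = 0 :=
      linear_integral_zero hr0.le hKq0 heC hqb hqe_int heeq
    have hψρ : ∀ t ∈ Icc 0 r, ψ t = ψ 0 * ρ t := by
      intro t ht
      have h1 := hvψ t ht
      have h2 := hezero t ht
      simp only [hed, hVd] at h2
      have h3 : ψ t * u t = (ψ 0 * ρ t) * u t := by linear_combination h1 + h2
      exact mul_right_cancel₀ (hunz t ht) h3
    -- ============ logarithmic identity ============
    have hLs : ∀ t ∈ Icc 0 r,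
        Real.log (g₁ (s t)) - Real.log (g₂ (s t)) = Real.log (ψ 0) + H t := by
      intro t ht
      have hg1 : g₁ (s t) ≠ 0 := ne_of_gt (hg₁pos _ (hspos t ht))
      have hg2 : g₂ (s t) ≠ 0 := ne_of_gt (hg₂pos _ (hspos t ht))
      have h4 : Real.log (ψ t) = Real.log (g₁ (s t)) - Real.log (g₂ (s t)) := by
        rw [hψd]
        simp only
        exact Real.log_div hg1 hg2
      have h5 : Real.log (ψ t) = Real.log (ψ 0) + H t := by
        rw [hψρ t ht, Real.log_mul (ne_of_gt hψ0pos) (ne_of_gt (hρpos t)), hρd]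
        simp only [Real.log_exp]
      linarith
    -- ============ differentiability of s ============
    have hκne : ∀ y : ℝ, 0 < y → κ y ≠ 0 := by
      rcases hA with h | h
      · exact fun y hy => (h y hy).1
      · exact fun y hy => (h y hy).1
    have hsd : ∀ t ∈ Ioo (0:ℝ) r, HasDerivAt s ((κ (s t))⁻¹ * m t) t := by
      intro t ht
      have htIcc : t ∈ Icc (0:ℝ) r := ⟨ht.1.le, ht.2.le⟩
      have hy : 0 < s t := hspos t htIcc
      have hIccnh : Icc (0:ℝ) r ∈ nhds t := Icc_mem_nhds ht.1 ht.2
      have hsCat : ContinuousAt s t := hsC.continuousAt hIccnh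
      have hg₁cd : ContDiffAt ℝ 1 g₁ (s t) := hg₁C.contDiffAt (Ici_mem_nhds hy)
      have hg₂cd : ContDiffAt ℝ 1 g₂ (s t) := hg₂C.contDiffAt (Ici_mem_nhds hy)
      have hg1ne : g₁ (s t) ≠ 0 := ne_of_gt (hg₁pos _ hy)
      have hg2ne : g₂ (s t) ≠ 0 := ne_of_gt (hg₂pos _ hy)
      set L : ℝ → ℝ := fun y => Real.log (g₁ y) - Real.log (g₂ y) with hLd
      have hLcd : ContDiffAt ℝ 1 L (s t) := (hg₁cd.log hg1ne).sub (hg₂cd.log hg2ne)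
      have hLev : (fun z => Real.log (g₁ z / g₂ z)) =ᶠ[nhds (s t)] L := by
        have h1 : ∀ᶠ z in nhds (s t), g₁ z ≠ 0 :=
          hg₁cd.continuousAt.eventually_ne hg1ne
        have h2 : ∀ᶠ z in nhds (s t), g₂ z ≠ 0 :=
          hg₂cd.continuousAt.eventually_ne hg2ne
        filter_upwards [h1, h2] with z hz1 hz2
        rw [hLd]
        exact Real.log_div hz1 hz2
      have hκval : κ (s t) = deriv L (s t) := by
        rw [hκ (s t)]
        exact hLev.deriv_eq
      have hκ0 : κ (s t) ≠ 0 := hκne (s t) hy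
      have hstrict : HasStrictDerivAt L (κ (s t)) (s t) := by
        rw [hκval]
        exact hLcd.hasStrictDerivAt one_ne_zero
      set Φ : ℝ → ℝ := hstrict.localInverse L (κ (s t)) (s t) hκ0 with hΦdef
      have hΦinv := (hstrict.hasStrictFDerivAt_equiv hκ0).eventually_left_inverse
      have hev1 : ∀ᶠ t' in nhds t, Φ (L (s t')) = s t' := by
        have := hsCat.eventually hΦinv
        exact this
      have hev2 : ∀ᶠ t' in nhds t, L (s t') = Real.log (ψ 0) + H t' := by
        filter_upwards [hIccnh] with t' ht'
        rw [hLd]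
        exact hLs t' ht'
      have hevs : (fun t' => Φ (Real.log (ψ 0) + H t')) =ᶠ[nhds t] s := by
        filter_upwards [hev1, hev2] with t' h1 h2
        rw [← h2]
        exact h1
      have hLst : L (s t) = Real.log (ψ 0) + H t := by
        rw [hLd]
        exact hLs t htIcc
      have hΦd : HasDerivAt Φ (κ (s t))⁻¹ (Real.log (ψ 0) + H t) := by
        rw [← hLst]
        exact (hstrict.to_localInverse hκ0).hasDerivAt
      have hinner : HasDerivAt (fun t' => Real.log (ψ 0) + H t') (m t) t :=
        (hHder t ht).const_add _
      have hcomp := hΦd.comp t hinner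
      exact hcomp.congr_of_eventuallyEq hevs.symm
    have hsd' : ∀ x ∈ Ioo (0:ℝ) r, HasDerivAt s (m x / κ (s x)) x := by
      intro x hx
      rw [div_eq_inv_mul]
      exact hsd x hx
    -- ============ endgame ============
    have hainv : a⁻¹ ∈ Icc (0:ℝ) r :=
      ⟨by positivity, by nlinarith [inv_pos.mpr hc, hr]⟩
    have hcinv : c⁻¹ ∈ Icc (0:ℝ) r :=
      ⟨by positivity, by nlinarith [inv_pos.mpr ha, hr]⟩
    have hsum : c⁻¹ + a⁻¹ ∈ Icc (0:ℝ) r := ⟨by positivity, hr⟩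
    have haa : a * a⁻¹ = 1 := mul_inv_cancel₀ (ne_of_gt ha)
    have hcc : c * c⁻¹ = 1 := mul_inv_cancel₀ (ne_of_gt hc)
    have hs0 : 0 < s 0 := hspos 0 h0mem
    rcases hA with hA3 | hA4
    · -- case (A3)
      have hbound : ∀ x ∈ Ioo (0:ℝ) r, m x / κ (s x) ≤ -a * (s x) ^ 2 - c := by
        intro x hx
        have hsx : 0 < s x := hspos x ⟨hx.1.le, hx.2.le⟩
        have := (hA3 (s x) hsx).2
        rw [hmd]
        exact this
      have anti1 : AntitoneOn (fun t => s t + c * t) (Icc 0 r) := by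
        apply chem_antitoneOn (hsC.add (continuous_const.mul continuous_id).continuousOn)
        intro x hx
        have hsx : 0 < s x := hspos x ⟨hx.1.le, hx.2.le⟩
        refine ⟨m x / κ (s x) + c * 1, ?_, ?_⟩
        · have := hbound x hx
          nlinarith [sq_nonneg (s x)]
        · exact (hsd' x hx).add ((hasDerivAt_id x).const_mul c)
      have anti2 : AntitoneOn (fun t => a * t - (s t)⁻¹) (Icc 0 r) := by
        apply chem_antitoneOn
          ((continuous_const.mul continuous_id).continuousOn.sub
            (hsC.inv₀ (fun t ht => ne_of_gt (hspos t ht))))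
        intro x hx
        have hsx : 0 < s x := hspos x ⟨hx.1.le, hx.2.le⟩
        have hsq : 0 < (s x) ^ 2 := by positivity
        refine ⟨a * 1 - -(m x / κ (s x)) / (s x) ^ 2, ?_, ?_⟩
        · have hb := hbound x hx
          have h1 : m x / κ (s x) / (s x) ^ 2 ≤ -a := by
            rw [div_le_iff₀ hsq]
            nlinarith
          have h2 : -(m x / κ (s x)) / (s x) ^ 2 = -(m x / κ (s x) / (s x) ^ 2) := by
            ring
          rw [h2]
          linarith
        · exact ((hasDerivAt_id x).const_mul a).sub ((hsd' x hx).inv (ne_of_gt hsx))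
      have hstep1 := anti2 h0mem hainv (by positivity)
      have hsainv : 0 < s a⁻¹ := hspos _ hainv
      have hlt1 : s a⁻¹ < 1 := by
        have h1 : 1 < (s a⁻¹)⁻¹ := by
          simp only at hstep1
          nlinarith [hstep1, inv_pos.mpr hs0]
        nlinarith [mul_inv_cancel₀ (ne_of_gt hsainv)]
      have ht2mem : a⁻¹ + c⁻¹ ∈ Icc (0:ℝ) r := ⟨by positivity, by linarith [hr]⟩
      have hle12 : a⁻¹ ≤ a⁻¹ + c⁻¹ := by nlinarith [inv_pos.mpr hc]
      have hstep2 := anti1 hainv ht2mem hle12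
      simp only at hstep2
      have hfin : s (a⁻¹ + c⁻¹) ≤ s a⁻¹ - 1 := by nlinarith [hstep2]
      have := hspos _ ht2mem
      linarith
    · -- case (A4)
      have hbound : ∀ x ∈ Ioo (0:ℝ) r, a * (s x) ^ 2 + c ≤ m x / κ (s x) := by
        intro x hx
        have hsx : 0 < s x := hspos x ⟨hx.1.le, hx.2.le⟩
        have := (hA4 (s x) hsx).2
        rw [hmd]
        exact this
      have mono1 : MonotoneOn (fun t => s t - c * t) (Icc 0 r) := by
        apply chem_monotoneOn (hsC.sub (continuous_const.mul continuous_id).continuousOn)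
        intro x hx
        have hsx : 0 < s x := hspos x ⟨hx.1.le, hx.2.le⟩
        refine ⟨m x / κ (s x) - c * 1, ?_, ?_⟩
        · have := hbound x hx
          nlinarith [sq_nonneg (s x)]
        · exact (hsd' x hx).sub ((hasDerivAt_id x).const_mul c)
      have anti4 : AntitoneOn (fun t => (s t)⁻¹ + a * t) (Icc 0 r) := by
        apply chem_antitoneOn
          ((hsC.inv₀ (fun t ht => ne_of_gt (hspos t ht))).add
            (continuous_const.mul continuous_id).continuousOn)
        intro x hx
        have hsx : 0 < s x := hspos x ⟨hx.1.le, hx.2.le⟩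
        have hsq : 0 < (s x) ^ 2 := by positivity
        refine ⟨-(m x / κ (s x)) / (s x) ^ 2 + a * 1, ?_, ?_⟩
        · have hb := hbound x hx
          have h1 : a ≤ m x / κ (s x) / (s x) ^ 2 := by
            rw [le_div_iff₀ hsq]
            nlinarith
          have h2 : -(m x / κ (s x)) / (s x) ^ 2 = -(m x / κ (s x) / (s x) ^ 2) := by
            ring
          rw [h2]
          linarith
        · exact ((hsd' x hx).inv (ne_of_gt hsx)).add ((hasDerivAt_id x).const_mul a)
      have hstep1 := mono1 h0mem hcinv (by positivity)
      simp only at hstep1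
      have hgt1 : 1 < s c⁻¹ := by nlinarith [hstep1]
      have hscinv : 0 < s c⁻¹ := hspos _ hcinv
      have hstep2 := anti4 hcinv hsum (by nlinarith [inv_pos.mpr ha])
      simp only at hstep2
      have hinvlt : (s c⁻¹)⁻¹ < 1 := by
        nlinarith [mul_inv_cancel₀ (ne_of_gt hscinv)]
      have hpos2 : 0 < (s (c⁻¹ + a⁻¹))⁻¹ := inv_pos.mpr (hspos _ hsum)
      nlinarith [hstep2]
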